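/- Let (Σ, μ) be a measure space, ρ : Σ → ℝ a measurable function with ρ(z) > 0 for all z, g ∈ ℝ a constant, and let σ : ℝ² × Σ → ℝ, H, L : ℝ² × Σ → ℝ and φ : ℝ² × Σ → ℂ be functions such that for every z ∈ Σ the maps s ↦ σ(s,z), s ↦ H(s,z), s ↦ L(s,z), s ↦ φ(s,z) are twice continuously differentiable with σ(s,z) > 0, σ(0,z) = ρ(z), H(s,z)·L(s,z) = |φ(s,z)|²/σ(s,z)², L(s,z) ≥ 0, φ(0,z) = 0, H(0,z) = 1; suppose moreover that H·σ, L·σ and their first and second s-partial derivatives are dominated, uniformly for s in a neighborhood of 0, by μ-integrable functions of z (so that differentiation under the integral sign is valid), and that ∫_Σ (H(s,z) − L(s,z))·σ(s,z) dμ(z) = g for all s near 0. Define E(s) = ∫_Σ (H(s,z) + L(s,z))·σ(s,z) dμ(z). Then E(s) = g + 2∫_Σ L(s,z)σ(s,z) dμ(z) ≥ g = E(0) for all s near 0, both first partial derivatives of E vanish at s = 0, and for all i, j ∈ {1,2}: ∂²E/∂sᵢ∂sⱼ(0) = 4 ∫_Σ Re(∂φ/∂sᵢ(0,z) · conj(∂φ/∂sⱼ(0,z)))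 / ρ(z) dμ(z). -/

import Mathlib

open MeasureTheory

/-- The two standard basis directions of `ℝ²`. -/
noncomputable def e2 : Fin 2 → ℝ × ℝ := ![(1, 0), (0, 1)]

lemma norm_e2 (i : Fin 2) : ‖e2 i‖ = 1 := by
  fin_cases i <;> simp [e2, Prod.norm_def]

lemma norm_fderiv_fderiv_le (f : ℝ × ℝ → ℝ) (x : ℝ × ℝ) :
    ‖fderiv ℝ (fderiv ℝ f) x‖ ≤ ‖iteratedFDeriv ℝ 2 f x‖ := by
  refine ContinuousLinearMap.opNorm_le_bound _ (norm_nonneg _) fun w => ?_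
  refine ContinuousLinearMap.opNorm_le_bound _ (by positivity) fun v => ?_
  have h := (iteratedFDeriv ℝ 2 f x).le_opNorm ![w, v]
  rw [iteratedFDeriv_two_apply] at h
  simpa [Fin.prod_univ_two, mul_assoc] using h

lemma hasFDerivAt_fderiv_mul {f g : ℝ × ℝ → ℝ} (hf : ContDiff ℝ 2 f) (hg : ContDiff ℝ 2 g)
    (x : ℝ × ℝ) :
    HasFDerivAt (fun s => fderiv ℝ (fun y => f y * g y) s)
      (f x • fderiv ℝ (fderiv ℝ g) x + (fderiv ℝ f x).smulRight (fderiv ℝ g x)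
        + (g x • fderiv ℝ (fderiv ℝ f) x + (fderiv ℝ g x).smulRight (fderiv ℝ f x))) x := by
  have hfd : Differentiable ℝ f := hf.differentiable two_ne_zero
  have hgd : Differentiable ℝ g := hg.differentiable two_ne_zero
  have hfD : Differentiable ℝ (fderiv ℝ f) :=
    (hf.fderiv_right (m := 1) (by norm_num)).differentiable one_ne_zero
  have hgD : Differentiable ℝ (fderiv ℝ g) :=
    (hg.fderiv_right (m := 1) (by norm_num)).differentiable one_ne_zero
  have hkey : (fun s => fderiv ℝ (fun y => f y * g y) s)
      = fun s => f s • fderiv ℝ g s + g s • fderiv ℝ f s :=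
    funext fun s => fderiv_mul (hfd s) (hgd s)
  rw [hkey]
  exact ((hfd x).hasFDerivAt.smul (hgD x).hasFDerivAt).add
    ((hgd x).hasFDerivAt.smul (hfD x).hasFDerivAt)

lemma fderiv2_mul_apply {f g : ℝ × ℝ → ℝ} (hf : ContDiff ℝ 2 f) (hg : ContDiff ℝ 2 g)
    (x w v : ℝ × ℝ) :
    fderiv ℝ (fderiv ℝ (fun y => f y * g y)) x w v
      = f x * fderiv ℝ (fderiv ℝ g) x w v + fderiv ℝ f x w * fderiv ℝ g x v
        + g x * fderiv ℝ (fderiv ℝ f) x w v + fderiv ℝ g x w * fderiv ℝ f x v := by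
  rw [(hasFDerivAt_fderiv_mul hf hg x).fderiv]
  simp only [ContinuousLinearMap.add_apply, ContinuousLinearMap.smul_apply,
    ContinuousLinearMap.smulRight_apply, smul_eq_mul]
  ring

lemma hasFDerivAt_fderiv_apply {f : ℝ × ℝ → ℝ} (hf : ContDiff ℝ 2 f) (x v : ℝ × ℝ) :
    HasFDerivAt (fun s => fderiv ℝ f s v) ((fderiv ℝ (fderiv ℝ f) x).flip v) x := by
  have h := ((((hf.fderiv_right (m := 1) (by norm_num)).differentiable one_ne_zero) x).hasFDerivAt).clm_apply
    (hasFDerivAt_const v x)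
  simpa using h

lemma fderiv2_abs_sq {p : ℝ × ℝ → ℂ} (hp : ContDiff ℝ 2 p) (hp0 : p 0 = 0) (w v : ℝ × ℝ) :
    fderiv ℝ (fderiv ℝ (fun s => ‖p s‖ ^ 2)) 0 w v
      = 2 * ((fderiv ℝ p 0 w) * (starRingEnd ℂ) (fderiv ℝ p 0 v)).re := by
  set r : ℝ × ℝ → ℝ := fun s => (p s).re with hrdef
  set m : ℝ × ℝ → ℝ := fun s => (p s).im with hmdef
  have hrc : ContDiff ℝ 2 r := Complex.reCLM.contDiff.comp hp
  have hmc : ContDiff ℝ 2 m := Complex.imCLM.contDiff.comp hp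
  have hr0 : r 0 = 0 := by simp [hrdef, hp0]
  have hm0 : m 0 = 0 := by simp [hmdef, hp0]
  have hq : (fun s => ‖p s‖ ^ 2) = fun s => r s * r s + m s * m s := by
    funext s
    rw [Complex.sq_norm, Complex.normSq_apply]
  have hrr : ContDiff ℝ 2 (fun y => r y * r y) := hrc.mul hrc
  have hmm : ContDiff ℝ 2 (fun y => m y * m y) := hmc.mul hmc
  have hsum1 : fderiv ℝ (fun y => r y * r y + m y * m y)
      = fun s => fderiv ℝ (fun y => r y * r y) s + fderiv ℝ (fun y => m y * m y) s :=
    funext fun s => fderiv_add ((hrr.differentiable two_ne_zero) s)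
      ((hmm.differentiable two_ne_zero) s)
  have hArr : DifferentiableAt ℝ (fderiv ℝ (fun y => r y * r y)) 0 :=
    ((hrr.fderiv_right (m := 1) (by norm_num)).differentiable one_ne_zero) 0
  have hAmm : DifferentiableAt ℝ (fderiv ℝ (fun y => m y * m y)) 0 :=
    ((hmm.fderiv_right (m := 1) (by norm_num)).differentiable one_ne_zero) 0
  have hpd : HasFDerivAt p (fderiv ℝ p 0) 0 := (hp.differentiable two_ne_zero 0).hasFDerivAt
  have hrD : fderiv ℝ r 0 = Complex.reCLM.comp (fderiv ℝ p 0) :=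
    (Complex.reCLM.hasFDerivAt.comp 0 hpd).fderiv
  have hmD : fderiv ℝ m 0 = Complex.imCLM.comp (fderiv ℝ p 0) :=
    (Complex.imCLM.hasFDerivAt.comp 0 hpd).fderiv
  rw [hq, hsum1, fderiv_fun_add hArr hAmm]
  simp only [ContinuousLinearMap.add_apply]
  rw [fderiv2_mul_apply hrc hrc 0 w v, fderiv2_mul_apply hmc hmc 0 w v, hr0, hm0, hrD, hmD]
  simp only [ContinuousLinearMap.comp_apply, Complex.reCLM_apply, Complex.imCLM_apply,
    Complex.mul_re, Complex.conj_re, Complex.conj_im]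
  ring

lemma key_pointwise {a b : ℝ × ℝ → ℝ} {p : ℝ × ℝ → ℂ} {r : ℝ}
    (ha : ContDiff ℝ 2 a) (hb : ContDiff ℝ 2 b) (hp : ContDiff ℝ 2 p)
    (hab : ∀ s, a s * b s = ‖p s‖ ^ 2)
    (ha0 : a 0 = r) (hrpos : 0 < r) (hbnn : ∀ s, 0 ≤ b s) (hb0 : b 0 = 0) (hp0 : p 0 = 0)
    (w v : ℝ × ℝ) :
    fderiv ℝ (fderiv ℝ b) 0 w v
      = 2 * ((fderiv ℝ p 0 w) * (starRingEnd ℂ) (fderiv ℝ p 0 v)).re / r := by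
  have hmin : IsLocalMin b 0 := Filter.Eventually.of_forall fun s => by
    rw [hb0]; exact hbnn s
  have hDb0 : fderiv ℝ b 0 = 0 := hmin.fderiv_eq_zero
  have h2 := fderiv2_mul_apply ha hb 0 w v
  rw [hb0, hDb0] at h2
  simp only [ContinuousLinearMap.zero_apply, mul_zero, zero_mul, add_zero] at h2
  have habf : (fun y => a y * b y) = fun s => ‖p s‖ ^ 2 := funext hab
  rw [habf, fderiv2_abs_sq hp hp0 w v, ha0] at h2
  field_simp at h2 ⊢
  linarith

/-- The candidate second-derivative continuous linear map built from `∂φ(0)`. -/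
noncomputable def Psi (T : (ℝ × ℝ) →L[ℝ] ℂ) (r : ℝ) (v : ℝ × ℝ) : (ℝ × ℝ) →L[ℝ] ℝ :=
  (2 / r) • (((T v).re • (Complex.reCLM.comp T)) + ((T v).im • (Complex.imCLM.comp T)))

lemma Psi_apply (T : (ℝ × ℝ) →L[ℝ] ℂ) (r : ℝ) (v w : ℝ × ℝ) :
    Psi T r v w = 2 * ((T w) * (starRingEnd ℂ) (T v)).re / r := by
  simp only [Psi, ContinuousLinearMap.smul_apply, ContinuousLinearMap.add_apply,
    ContinuousLinearMap.comp_apply, Complex.reCLM_apply, Complex.imCLM_apply, smul_eq_mul,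
    Complex.mul_re, Complex.conj_re, Complex.conj_im]
  ring

lemma Psi_aestronglyMeasurable {Ω : Type*} [MeasurableSpace Ω] {μ : Measure Ω}
    {T : Ω → (ℝ × ℝ) →L[ℝ] ℂ} {r : Ω → ℝ} (hT : AEStronglyMeasurable T μ)
    (hr : Measurable r) (v : ℝ × ℝ) :
    AEStronglyMeasurable (fun z => Psi (T z) (r z) v) μ := by
  unfold Psi
  refine AEStronglyMeasurable.smul ((measurable_const.div hr).aestronglyMeasurable) ?_
  refine AEStronglyMeasurable.add (AEStronglyMeasurable.fun_smul ?_ ?_)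
    (AEStronglyMeasurable.fun_smul ?_ ?_)
  · exact (Complex.continuous_re.comp
      (ContinuousLinearMap.apply ℝ ℂ v).continuous).comp_aestronglyMeasurable hT
  · exact ((ContinuousLinearMap.compL ℝ (ℝ × ℝ) ℂ ℝ Complex.reCLM).continuous).comp_aestronglyMeasurable hT
  · exact (Complex.continuous_im.comp
      (ContinuousLinearMap.apply ℝ ℂ v).continuous).comp_aestronglyMeasurable hT
  · exact ((ContinuousLinearMap.compL ℝ (ℝ × ℝ) ℂ ℝ Complex.imCLM).continuous).comp_aestronglyMeasurable hT

lemma re_mul_conj_comm (a b : ℂ) :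
    (a * (starRingEnd ℂ) b).re = (b * (starRingEnd ℂ) a).re := by
  simp only [Complex.mul_re, Complex.conj_re, Complex.conj_im]
  ring

/-- Analytic content of Theorem 1.3 (varying the domain): for a two-parameter family of
densities `H, L` and domain metrics `σ(s)` with `σ(0) = ρ`, `H·L = |φ|²/σ(s)²`,
`φ(0,·) = 0`, `H(0,·) = 1`, `L ≥ 0`, with the integrands `H·σ`, `L·σ` and their
`s`-derivatives dominated (uniformly near `s = 0`) by integrable functions so that
differentiation under the integral sign is valid, and with constant Jacobian integral
`∫ (H − L)σ(s) = g`, the energy `E(s) = ∫ (H + L)σ(s)` satisfies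
`E(s) = g + 2∫Lσ(s) ≥ g = E(0)`, has a critical point at `s = 0`, and its second
variation there is `4 ∫ Re(∂ᵢφ · conj(∂ⱼφ))/ρ`, i.e. the `L²`-Bergman pairing
(up to a constant). -/
theorem second_variation_energy_varying_domain
    {Ω : Type*} [MeasurableSpace Ω] (μ : Measure Ω)
    (ρ : Ω → ℝ) (hρmeas : Measurable ρ) (hρpos : ∀ z, 0 < ρ z) (g : ℝ)
    (σ : ℝ × ℝ → Ω → ℝ) (H L : ℝ × ℝ → Ω → ℝ) (φ : ℝ × ℝ → Ω → ℂ)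
    (hσdiff : ∀ z, ContDiff ℝ 2 (fun s => σ s z))
    (hHdiff : ∀ z, ContDiff ℝ 2 (fun s => H s z))
    (hLdiff : ∀ z, ContDiff ℝ 2 (fun s => L s z))
    (hφdiff : ∀ z, ContDiff ℝ 2 (fun s => φ s z))
    (hσpos : ∀ s z, 0 < σ s z) (hσ0 : ∀ z, σ 0 z = ρ z)
    (heq : ∀ s z, H s z * L s z = (‖φ s z‖) ^ 2 / (σ s z) ^ 2)
    (hLnonneg : ∀ s z, 0 ≤ L s z)
    (hφ0 : ∀ z, φ 0 z = 0) (hH0 : ∀ z, H 0 z = 1)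
    -- measurability in `z` of the integrands and their variations
    (hHσmeas : ∀ s, AEStronglyMeasurable (fun z => H s z * σ s z) μ)
    (hLσmeas : ∀ s, AEStronglyMeasurable (fun z => L s z * σ s z) μ)
    (hHσ1meas : ∀ s, AEStronglyMeasurable
      (fun z => fderiv ℝ (fun u => H u z * σ u z) s) μ)
    (hLσ1meas : ∀ s, AEStronglyMeasurable
      (fun z => fderiv ℝ (fun u => L u z * σ u z) s) μ)
    (hφ1meas : ∀ s, AEStronglyMeasurable (fun z => fderiv ℝ (fun u => φ u z) s) μ)
    -- uniform domination of `H·σ`, `L·σ` and their `s`-derivatives near `s = 0`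
    (ε : ℝ) (hε : 0 < ε) (B₀ B₁ B₂ : Ω → ℝ)
    (hB₀ : Integrable B₀ μ) (hB₁ : Integrable B₁ μ) (hB₂ : Integrable B₂ μ)
    (hdom₀ : ∀ s z, ‖s‖ < ε → |H s z * σ s z| + |L s z * σ s z| ≤ B₀ z)
    (hdom₁ : ∀ s z, ‖s‖ < ε →
      ‖fderiv ℝ (fun u => H u z * σ u z) s‖ +
        ‖fderiv ℝ (fun u => L u z * σ u z) s‖ ≤ B₁ z)
    (hdom₂ : ∀ s z, ‖s‖ < ε →
      ‖iteratedFDeriv ℝ 2 (fun u => H u z * σ u z) s‖ +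
        ‖iteratedFDeriv ℝ 2 (fun u => L u z * σ u z) s‖ ≤ B₂ z)
    -- the Jacobian integral is the constant `g` near `s = 0`
    (hJ : ∀ s, ‖s‖ < ε → (∫ z, (H s z - L s z) * σ s z ∂μ) = g)
    -- the energy functional
    (E : ℝ × ℝ → ℝ) (hE : E = fun s => ∫ z, (H s z + L s z) * σ s z ∂μ) :
    (∀ s, ‖s‖ < ε → E s = g + 2 * ∫ z, L s z * σ s z ∂μ) ∧
    (∀ s, ‖s‖ < ε → g ≤ E s) ∧
    E 0 = g ∧
    (∀ i : Fin 2, fderiv ℝ E 0 (e2 i) = 0) ∧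
    (∀ i j : Fin 2,
      fderiv ℝ (fun s => fderiv ℝ E s (e2 i)) 0 (e2 j) =
        4 * ∫ z, ((fderiv ℝ (fun u => φ u z) 0 (e2 i)) *
            (starRingEnd ℂ) (fderiv ℝ (fun u => φ u z) 0 (e2 j))).re / ρ z ∂μ) := by
  subst hE
  have hnorm0 : ‖(0 : ℝ × ℝ)‖ < ε := by simpa using hε
  have hL0 : ∀ z, L 0 z = 0 := fun z => by
    have h := heq 0 z
    rw [hφ0 z, hH0 z] at h
    simpa using h
  have hABcd : ∀ z, ContDiff ℝ 2 (fun s => H s z * σ s z) := fun z => (hHdiff z).mul (hσdiff z)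
  have hBcd : ∀ z, ContDiff ℝ 2 (fun s => L s z * σ s z) := fun z => (hLdiff z).mul (hσdiff z)
  -- pointwise facts for the key lemma
  have hab : ∀ z s, (H s z * σ s z) * (L s z * σ s z) = ‖φ s z‖ ^ 2 := by
    intro z s
    have h := heq s z
    have hσne : σ s z ≠ 0 := (hσpos s z).ne'
    field_simp at h
    calc (H s z * σ s z) * (L s z * σ s z) = H s z * L s z * σ s z ^ 2 := by ring
      _ = ‖φ s z‖ ^ 2 := h
  have hA0 : ∀ z, H 0 z * σ 0 z = ρ z := fun z => by rw [hH0 z, hσ0 z, one_mul]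
  have hbnn : ∀ z s, 0 ≤ L s z * σ s z := fun z s => mul_nonneg (hLnonneg s z) (hσpos s z).le
  have hb0 : ∀ z, L 0 z * σ 0 z = 0 := fun z => by rw [hL0 z, zero_mul]
  -- integrability
  have hmemball : ∀ s : ℝ × ℝ, ‖s‖ < ε ↔ s ∈ Metric.ball (0 : ℝ × ℝ) ε := by
    intro s; rw [Metric.mem_ball, dist_zero_right]
  have hHint : ∀ s, ‖s‖ < ε → Integrable (fun z => H s z * σ s z) μ := fun s hs =>
    hB₀.mono' (hHσmeas s) (Filter.Eventually.of_forall fun z => by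
      have h := hdom₀ s z hs
      have h2 : (0:ℝ) ≤ |L s z * σ s z| := abs_nonneg _
      rw [Real.norm_eq_abs]; linarith)
  have hLint : ∀ s, ‖s‖ < ε → Integrable (fun z => L s z * σ s z) μ := fun s hs =>
    hB₀.mono' (hLσmeas s) (Filter.Eventually.of_forall fun z => by
      have h := hdom₀ s z hs
      have h2 : (0:ℝ) ≤ |H s z * σ s z| := abs_nonneg _
      rw [Real.norm_eq_abs]; linarith)
  have hF1int : ∀ s, ‖s‖ < ε →
      Integrable (fun z => fderiv ℝ (fun u => L u z * σ u z) s) μ := fun s hs =>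
    hB₁.mono' (hLσ1meas s) (Filter.Eventually.of_forall fun z => by
      have h := hdom₁ s z hs
      have h2 : (0:ℝ) ≤ ‖fderiv ℝ (fun u => H u z * σ u z) s‖ := norm_nonneg _
      simpa using (by linarith : ‖fderiv ℝ (fun u => L u z * σ u z) s‖ ≤ B₁ z))
  -- Part 1
  have key1 : ∀ s, ‖s‖ < ε →
      (∫ z, (H s z + L s z) * σ s z ∂μ) = g + 2 * ∫ z, L s z * σ s z ∂μ := by
    intro s hs
    have hsub : Integrable (fun z => (H s z - L s z) * σ s z) μ := by
      have hcongr : (fun z => (H s z - L s z) * σ s z)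
          = fun z => H s z * σ s z - L s z * σ s z := by funext z; ring
      rw [hcongr]; exact (hHint s hs).sub (hLint s hs)
    have h2L : Integrable (fun z => 2 * (L s z * σ s z)) μ := (hLint s hs).const_mul 2
    have hcongr : (fun z => (H s z + L s z) * σ s z)
        = fun z => (H s z - L s z) * σ s z + 2 * (L s z * σ s z) := by funext z; ring
    rw [hcongr, integral_add hsub h2L, hJ s hs, integral_const_mul]
  -- Part 2
  have key2 : ∀ s, ‖s‖ < ε → g ≤ ∫ z, (H s z + L s z) * σ s z ∂μ := by
    intro s hs
    rw [key1 s hs]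
    have h0 : 0 ≤ ∫ z, L s z * σ s z ∂μ := integral_nonneg fun z => hbnn z s
    linarith
  -- Part 3
  have key3 : (∫ z, (H 0 z + L 0 z) * σ 0 z ∂μ) = g := by
    have hcongr : (fun z => (H 0 z + L 0 z) * σ 0 z)
        = fun z => (H 0 z - L 0 z) * σ 0 z := by
      funext z; rw [hL0 z]; ring
    rw [hcongr, hJ 0 hnorm0]
  -- Part 4
  have hmin : IsLocalMin (fun s => ∫ z, (H s z + L s z) * σ s z ∂μ) 0 := by
    filter_upwards [Metric.ball_mem_nhds (0 : ℝ × ℝ) hε] with s hs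
    rw [key3]
    exact key2 s ((hmemball s).2 hs)
  have key4 : fderiv ℝ (fun s => ∫ z, (H s z + L s z) * σ s z ∂μ) 0 = 0 :=
    hmin.fderiv_eq_zero
  -- Claim A : differentiation under the integral sign for ∫ Lσ
  have claimA : ∀ s₀, ‖s₀‖ < ε → HasFDerivAt (fun s => ∫ z, L s z * σ s z ∂μ)
      (∫ z, fderiv ℝ (fun u => L u z * σ u z) s₀ ∂μ) s₀ := by
    intro s₀ hs₀
    have hε' : 0 < ε - ‖s₀‖ := by linarith
    apply hasFDerivAt_integral_of_dominated_of_fderiv_le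
      (F' := fun x z => fderiv ℝ (fun u => L u z * σ u z) x) (bound := B₁) (Metric.ball_mem_nhds s₀ hε')
    · exact Filter.Eventually.of_forall fun s => hLσmeas s
    · exact hLint s₀ hs₀
    · exact hLσ1meas s₀
    · refine Filter.Eventually.of_forall fun z => fun x hx => ?_
      have hxε : ‖x‖ < ε := by
        have h1 : dist x s₀ < ε - ‖s₀‖ := hx
        have h2 : ‖x‖ - ‖s₀‖ ≤ dist x s₀ := by
          rw [dist_eq_norm]; exact norm_sub_norm_le x s₀
        linarith
      have h := hdom₁ x z hxε
      have h2 : (0:ℝ) ≤ ‖fderiv ℝ (fun u => H u z * σ u z) x‖ := norm_nonneg _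
      linarith
    · exact hB₁
    · exact Filter.Eventually.of_forall fun z => fun x _ =>
        (((hBcd z).differentiable two_ne_zero) x).hasFDerivAt
  -- derivative of `E` on the ball
  have hEloc : ∀ s, ‖s‖ < ε →
      fderiv ℝ (fun s' => ∫ z, (H s' z + L s' z) * σ s' z ∂μ) s
        = (2 : ℝ) • (∫ z, fderiv ℝ (fun u => L u z * σ u z) s ∂μ) := by
    intro s hs
    have hEq : (fun s' => ∫ z, (H s' z + L s' z) * σ s' z ∂μ)
        =ᶠ[nhds s] fun s' => g + 2 * ∫ z, L s' z * σ s' z ∂μ := by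
      filter_upwards [Metric.isOpen_ball.mem_nhds ((hmemball s).1 hs)] with s' hs'
      exact key1 s' ((hmemball s').2 hs')
    rw [hEq.fderiv_eq]
    exact (((claimA s hs).const_mul (2:ℝ)).const_add g).fderiv
  refine ⟨key1, key2, key3, ?_, ?_⟩
  · intro i
    rw [key4]
    rfl
  -- Part 5
  intro i j
  -- the directional derivative function near 0
  have hEd : (fun s => fderiv ℝ (fun s' => ∫ z, (H s' z + L s' z) * σ s' z ∂μ) s (e2 i))
      =ᶠ[nhds (0 : ℝ × ℝ)]
      fun s => 2 * ∫ z, fderiv ℝ (fun u => L u z * σ u z) s (e2 i) ∂μ := by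
    filter_upwards [Metric.ball_mem_nhds (0 : ℝ × ℝ) hε] with s hs
    rw [hEloc s ((hmemball s).2 hs), ContinuousLinearMap.smul_apply,
      ContinuousLinearMap.integral_apply (hF1int s ((hmemball s).2 hs)) (e2 i)]
    simp [smul_eq_mul]
  -- identification of the second derivative CLM with Psi
  have hF'eq : ∀ z, Psi (fderiv ℝ (fun u => φ u z) 0) (ρ z) (e2 i)
      = (fderiv ℝ (fderiv ℝ (fun u => L u z * σ u z)) 0).flip (e2 i) := by
    intro z
    refine ContinuousLinearMap.ext fun w => ?_
    rw [ContinuousLinearMap.flip_apply, Psi_apply,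
      key_pointwise (hABcd z) (hBcd z) (hφdiff z) (hab z) (hA0 z) (hρpos z) (hbnn z)
        (hb0 z) (hφ0 z) w (e2 i)]
  set F' : (ℝ × ℝ) → Ω → (ℝ × ℝ) →L[ℝ] ℝ := fun x z =>
    if x = 0 then Psi (fderiv ℝ (fun u => φ u z) 0) (ρ z) (e2 i)
    else (fderiv ℝ (fderiv ℝ (fun u => L u z * σ u z)) x).flip (e2 i) with hF'def
  have hF'all : ∀ x z,
      F' x z = (fderiv ℝ (fderiv ℝ (fun u => L u z * σ u z)) x).flip (e2 i) := by
    intro x z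
    by_cases hx : x = 0
    · subst hx
      have hc : F' 0 z = Psi (fderiv ℝ (fun u => φ u z) 0) (ρ z) (e2 i) := by
        simp [hF'def]
      rw [hc]; exact hF'eq z
    · simp only [hF'def, if_neg hx]
  have hF'bound : ∀ x z, ‖x‖ < ε → ‖F' x z‖ ≤ B₂ z := by
    intro x z hx
    rw [hF'all x z]
    calc ‖(fderiv ℝ (fderiv ℝ (fun u => L u z * σ u z)) x).flip (e2 i)‖
        ≤ ‖(fderiv ℝ (fderiv ℝ (fun u => L u z * σ u z)) x).flip‖ * ‖e2 i‖ :=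
          ContinuousLinearMap.le_opNorm _ _
      _ = ‖fderiv ℝ (fderiv ℝ (fun u => L u z * σ u z)) x‖ := by
          rw [ContinuousLinearMap.opNorm_flip, norm_e2, mul_one]
      _ ≤ ‖iteratedFDeriv ℝ 2 (fun u => L u z * σ u z) x‖ := norm_fderiv_fderiv_le _ x
      _ ≤ B₂ z := by
          have h := hdom₂ x z hx
          have h2 : (0:ℝ) ≤ ‖iteratedFDeriv ℝ 2 (fun u => H u z * σ u z) x‖ := norm_nonneg _
          linarith
  have hF'0meas : AEStronglyMeasurable (F' 0) μ := by
    have hcongr : F' 0 = fun z => Psi (fderiv ℝ (fun u => φ u z) 0) (ρ z) (e2 i) := by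
      funext z; simp [hF'def]
    rw [hcongr]
    exact Psi_aestronglyMeasurable (hφ1meas 0) hρmeas (e2 i)
  -- Claim C : second differentiation under the integral sign
  have claimC : HasFDerivAt
      (fun s => ∫ z, fderiv ℝ (fun u => L u z * σ u z) s (e2 i) ∂μ)
      (∫ z, F' 0 z ∂μ) 0 := by
    apply hasFDerivAt_integral_of_dominated_of_fderiv_le (F' := F') (bound := B₂) (Metric.ball_mem_nhds 0 hε)
    · refine Filter.Eventually.of_forall fun x => ?_
      exact (ContinuousLinearMap.apply ℝ ℝ (e2 i)).continuous.comp_aestronglyMeasurable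
        (hLσ1meas x)
    · refine hB₁.mono' ((ContinuousLinearMap.apply ℝ ℝ
        (e2 i)).continuous.comp_aestronglyMeasurable (hLσ1meas 0))
        (Filter.Eventually.of_forall fun z => ?_)
      have hc : ‖fderiv ℝ (fun u => L u z * σ u z) 0 (e2 i)‖
          ≤ ‖fderiv ℝ (fun u => L u z * σ u z) 0‖ * ‖e2 i‖ :=
        ContinuousLinearMap.le_opNorm _ _
      rw [norm_e2, mul_one] at hc
      have h := hdom₁ 0 z hnorm0
      have h2 : (0:ℝ) ≤ ‖fderiv ℝ (fun u => H u z * σ u z) 0‖ := norm_nonneg _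
      exact hc.trans (by linarith)
    · exact hF'0meas
    · refine Filter.Eventually.of_forall fun z x hx => ?_
      exact hF'bound x z ((hmemball x).2 hx)
    · exact hB₂
    · refine Filter.Eventually.of_forall fun z x _ => ?_
      rw [hF'all x z]
      exact hasFDerivAt_fderiv_apply (hBcd z) x (e2 i)
  -- assemble
  rw [hEd.fderiv_eq]
  have hC2 : HasFDerivAt
      (fun s => 2 * ∫ z, fderiv ℝ (fun u => L u z * σ u z) s (e2 i) ∂μ)
      ((2 : ℝ) • ∫ z, F' 0 z ∂μ) 0 := claimC.const_mul 2
  rw [hC2.fderiv, ContinuousLinearMap.smul_apply]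
  have hF'0int : Integrable (F' 0) μ :=
    hB₂.mono' hF'0meas (Filter.Eventually.of_forall fun z => by
      have := hF'bound 0 z hnorm0
      simpa using this)
  rw [ContinuousLinearMap.integral_apply hF'0int (e2 j)]
  have hval : ∀ z, F' 0 z (e2 j)
      = 2 * (((fderiv ℝ (fun u => φ u z) 0 (e2 i)) *
          (starRingEnd ℂ) (fderiv ℝ (fun u => φ u z) 0 (e2 j))).re / ρ z) := by
    intro z
    have hc : F' 0 z = Psi (fderiv ℝ (fun u => φ u z) 0) (ρ z) (e2 i) := by
      simp [hF'def]
    rw [hc, Psi_apply, re_mul_conj_comm]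
    ring
  rw [integral_congr_ae (Filter.Eventually.of_forall hval), integral_const_mul]
  simp only [smul_eq_mul]
  ring
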